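/- (Erdős lower bound) For k ≥ 3, R(k, k) > 2^{k/2}: there exists a 2-coloring of the edges of the complete graph on ⌊2^{k/2}⌋ vertices with no monochromatic clique of size k. -/

import Mathlib

/-- `hasRamsey N m k` : every red/blue (true/false) edge-coloring of the complete
graph on `N` vertices contains a red clique of size `m` or a blue clique of size `k`. -/
def hasRamsey (N m k : ℕ) : Prop :=
  ∀ c : Fin N → Fin N → Bool, (∀ i j, c i j = c j i) →
    (∃ s : Finset (Fin N), s.card = m ∧ ∀ i ∈ s, ∀ j ∈ s, i ≠ j → c i j = true) ∨
    (∃ s : Finset (Fin N), s.card = k ∧ ∀ i ∈ s, ∀ j ∈ s, i ≠ j → c i j = false)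

/-- The Ramsey number `R m k`, the least `N` with the Ramsey property. -/
noncomputable def ramseyNumber (m k : ℕ) : ℕ := sInf {N | hasRamsey N m k}

open Finset


lemma card_fixed {α : Type*} [Fintype α] [DecidableEq α] (A : Finset α) (b : Bool) :
    ((univ : Finset (α → Bool)).filter fun f => ∀ a ∈ A, f a = b).card
      = 2 ^ (Fintype.card α - A.card) := by
  have e : {f : α → Bool // ∀ a ∈ A, f a = b} ≃ ({a : α // a ∉ A} → Bool) :=
    { toFun := fun f a => f.1 a.1
      invFun := fun h => ⟨fun a => if ha : a ∈ A then b else h ⟨a, ha⟩, fun a ha => by simp [ha]⟩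
      left_inv := by
        rintro ⟨f, hf⟩
        ext a
        by_cases ha : a ∈ A <;> simp [ha, hf a]
      right_inv := by
        intro h; ext a; simp [a.2] }
  have h1 : ((univ : Finset (α → Bool)).filter fun f => ∀ a ∈ A, f a = b).card
      = Fintype.card {f : α → Bool // ∀ a ∈ A, f a = b} := (Fintype.card_subtype _).symm
  rw [h1, Fintype.card_congr e, Fintype.card_fun, Fintype.card_bool]
  congr 1
  rw [Fintype.card_subtype_compl, Fintype.card_coe]

lemma two_mul_choose_two (k : ℕ) : 2 * k.choose 2 = k * (k - 1) := by
  induction k with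
  | zero => rfl
  | succ k ih =>
    rw [Nat.choose_succ_succ, Nat.mul_add, ih]
    cases k with
    | zero => rfl
    | succ m => simp [Nat.choose_one_right]; ring

lemma fact_sq_gt {k : ℕ} (hk : 3 ≤ k) : 2 ^ (k + 2) < (k.factorial) ^ 2 := by
  induction k, hk using Nat.le_induction with
  | base => norm_num [Nat.factorial]
  | succ k hk ih =>
    have h1 : 2 ^ (k + 1 + 2) = 2 * 2 ^ (k + 2) := by ring
    have h2 : ((k+1).factorial) ^ 2 = (k+1)^2 * (k.factorial)^2 := by
      rw [Nat.factorial_succ]; ring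
    rw [h1, h2]
    have : 2 * 2 ^ (k+2) < 2 * (k.factorial)^2 := by omega
    refine this.trans_le (Nat.mul_le_mul_right _ ?_)
    nlinarith

lemma key_ineq {n k : ℕ} (hk : 3 ≤ k) (hn : n * n ≤ 2 ^ k) :
    2 * n.choose k < 2 ^ k.choose 2 := by
  rcases Nat.eq_zero_or_pos (n.choose k) with h0 | hpos
  · rw [h0]; simpa using Nat.pow_pos (n := k.choose 2) (by norm_num : 0 < 2)
  · have hsq : (2 * n.choose k) ^ 2 < (2 ^ k.choose 2) ^ 2 := by
      rw [← pow_mul, Nat.mul_comm (k.choose 2) 2, two_mul_choose_two]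
      set C := n.choose k
      set F := k.factorial
      have h1 : F * C ≤ n ^ k := by
        rw [← Nat.descFactorial_eq_factorial_mul_choose]
        exact Nat.descFactorial_le_pow n k
      have h2 : (n ^ k) ^ 2 ≤ 2 ^ (k * k) := by
        calc (n ^ k) ^ 2 = (n * n) ^ k := by ring
        _ ≤ (2 ^ k) ^ k := Nat.pow_le_pow_left hn k
        _ = 2 ^ (k * k) := by rw [← pow_mul]
      have hF : 0 < F ^ 2 := by positivity
      have key : (2 * C) ^ 2 * F ^ 2 < 2 ^ (k * (k - 1)) * F ^ 2 := by
        have e1 : (2 * C) ^ 2 * F ^ 2 = 4 * (F * C) ^ 2 := by ring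
        have e2 : 4 * (F * C) ^ 2 ≤ 4 * (n ^ k) ^ 2 :=
          Nat.mul_le_mul_left 4 (Nat.pow_le_pow_left h1 2)
        have e3 : (4 : ℕ) * 2 ^ (k * k) = 2 ^ (k * (k - 1)) * 2 ^ (k + 2) := by
          rw [← pow_add]
          obtain ⟨m, rfl⟩ : ∃ m, k = m + 3 := ⟨k - 3, by omega⟩
          norm_num; ring_nf
        have e4 : 2 ^ (k * (k-1)) * 2 ^ (k + 2) < 2 ^ (k * (k-1)) * F ^ 2 :=
          Nat.mul_lt_mul_of_le_of_lt le_rfl (fact_sq_gt hk) (Nat.pow_pos (by norm_num))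
        calc (2*C)^2 * F^2 = 4 * (F*C)^2 := e1
          _ ≤ 4 * (n^k)^2 := e2
          _ ≤ 4 * 2^(k*k) := Nat.mul_le_mul_left 4 h2
          _ = 2^(k*(k-1)) * 2^(k+2) := e3
          _ < 2^(k*(k-1)) * F^2 := e4
      exact Nat.lt_of_mul_lt_mul_right key
    exact lt_of_pow_lt_pow_left₀ 2 (by positivity) hsq

lemma card_edges {α : Type*} [DecidableEq α] (s : Finset α) :
    (s.sym2.filter fun e => ¬ e.IsDiag).card = s.card.choose 2 := by
  have hsplit : (s.sym2.filter fun e => e.IsDiag).card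
      + (s.sym2.filter fun e => ¬ e.IsDiag).card = s.sym2.card := by
    simpa using Finset.card_filter_add_card_filter_not
      (s := s.sym2) (p := fun e => e.IsDiag)
  have hdiag : (s.sym2.filter fun e => e.IsDiag) = s.image Sym2.diag := by
    ext e
    simp only [Finset.mem_filter, Finset.mem_image]
    constructor
    · rintro ⟨he, hd⟩
      obtain ⟨a, rfl⟩ : ∃ a, Sym2.diag a = e := ⟨_, Sym2.diag_diagElem (z := e) hd⟩
      exact ⟨a, (Finset.diag_mem_sym2_iff).mp he, rfl⟩
    · rintro ⟨a, ha, rfl⟩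
      exact ⟨Finset.diag_mem_sym2_iff.mpr ha, (Sym2.isDiag_iff_proj_eq (x := a) (y := a)).mpr rfl⟩
  have hcard : (s.sym2.filter fun e => e.IsDiag).card = s.card := by
    rw [hdiag, Finset.card_image_of_injective _ Sym2.diag_injective]
  have hs2 := Finset.card_sym2 s
  have hch : (s.card + 1).choose 2 = s.card + s.card.choose 2 := by
    rw [Nat.choose_succ_succ, Nat.choose_one_right]
  omega

lemma good_coloring {n k : ℕ} (hk : 3 ≤ k) (hn : n * n ≤ 2 ^ k) :
    ∃ χ : Sym2 (Fin n) → Bool,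
      ¬ ∃ (b : Bool) (s : Finset (Fin n)), s.card = k ∧
        ∀ i ∈ s, ∀ j ∈ s, i ≠ j → χ s(i, j) = b := by
  classical
  by_cases hnk : n < k
  · refine ⟨fun _ => true, ?_⟩
    rintro ⟨b, s, hcard, -⟩
    have := s.card_le_univ
    simp only [Fintype.card_fin, Finset.card_univ] at this
    omega
  push_neg at hnk
  set T := Fintype.card (Sym2 (Fin n)) with hT
  set edges : Finset (Fin n) → Finset (Sym2 (Fin n)) :=
    fun s => s.sym2.filter fun e => ¬ e.IsDiag with hedges
  set Mono : Bool × Finset (Fin n) → Finset (Sym2 (Fin n) → Bool) :=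
    fun p => univ.filter fun χ => ∀ e ∈ edges p.2, χ e = p.1 with hMono
  set I : Finset (Bool × Finset (Fin n)) := univ ×ˢ univ.powersetCard k with hI
  set Bad : Finset (Sym2 (Fin n) → Bool) :=
    univ.filter fun χ => ∃ (b : Bool) (s : Finset (Fin n)), s.card = k ∧
        ∀ i ∈ s, ∀ j ∈ s, i ≠ j → χ s(i, j) = b with hBad
  have hkT : k.choose 2 ≤ T := by
    obtain ⟨s, -, hs⟩ := Finset.exists_subset_card_eq
      (show k ≤ (univ : Finset (Fin n)).card by simpa using hnk)
    calc k.choose 2 = (edges s).card := by rw [hedges, card_edges, hs]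
      _ ≤ T := (edges s).card_le_univ
  have hsub : Bad ⊆ I.biUnion Mono := by
    intro χ hχ
    rw [hBad, Finset.mem_filter] at hχ
    obtain ⟨-, b, s, hcard, hmono⟩ := hχ
    refine Finset.mem_biUnion.mpr ⟨(b, s), ?_, ?_⟩
    · rw [hI, Finset.mem_product]
      exact ⟨Finset.mem_univ _, Finset.mem_powersetCard.mpr ⟨Finset.subset_univ _, hcard⟩⟩
    · rw [hMono, Finset.mem_filter]
      refine ⟨Finset.mem_univ _, fun e he => ?_⟩
      induction e using Sym2.ind with
      | _ i j =>
        rw [hedges, Finset.mem_filter, Finset.mk_mem_sym2_iff, Sym2.mk_isDiag_iff] at he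
        exact hmono i he.1.1 j he.1.2 he.2
  have hcount : Bad.card < 2 ^ T := by
    calc Bad.card ≤ (I.biUnion Mono).card := Finset.card_le_card hsub
      _ ≤ ∑ p ∈ I, (Mono p).card := Finset.card_biUnion_le
      _ = ∑ p ∈ I, 2 ^ (T - k.choose 2) := by
          refine Finset.sum_congr rfl fun p hp => ?_
          rw [hI, Finset.mem_product, Finset.mem_powersetCard] at hp
          rw [hMono]
          simp only
          rw [card_fixed, hedges, card_edges, hp.2.2]
      _ = I.card * 2 ^ (T - k.choose 2) := by rw [Finset.sum_const, smul_eq_mul]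
      _ = 2 * n.choose k * 2 ^ (T - k.choose 2) := by
          rw [hI, Finset.card_product, Finset.card_powersetCard]
          simp [Fintype.card_fin]
      _ < 2 ^ k.choose 2 * 2 ^ (T - k.choose 2) :=
          Nat.mul_lt_mul_of_lt_of_le (key_ineq hk hn) le_rfl
            (Nat.pow_pos (by norm_num))
      _ = 2 ^ T := by rw [← pow_add]; congr 1; omega
  have htotal : Fintype.card (Sym2 (Fin n) → Bool) = 2 ^ T := by
    rw [Fintype.card_fun, Fintype.card_bool]
  by_contra hall
  push_neg at hall
  have : Bad = univ := by
    ext χ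
    simp only [hBad, Finset.mem_filter, Finset.mem_univ, true_and, iff_true]
    exact hall χ
  rw [this, Finset.card_univ, htotal] at hcount
  exact lt_irrefl _ hcount

lemma clique_image {N M : ℕ} {f : Fin M → Fin N} (hf : Function.Injective f)
    {c : Fin N → Fin N → Bool} {b : Bool} {s : Finset (Fin M)}
    (h : ∀ i ∈ s, ∀ j ∈ s, i ≠ j → c (f i) (f j) = b) :
    (s.image f).card = s.card ∧
      ∀ i ∈ s.image f, ∀ j ∈ s.image f, i ≠ j → c i j = b := by
  refine ⟨Finset.card_image_of_injective _ hf, ?_⟩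
  intro i hi j hj hij
  obtain ⟨x, hx, rfl⟩ := Finset.mem_image.mp hi
  obtain ⟨y, hy, rfl⟩ := Finset.mem_image.mp hj
  exact h x hx y hy (fun e => hij (by rw [e]))

lemma hasRamsey_step {a b m k : ℕ} (ha : hasRamsey a m (k + 1)) (hb : hasRamsey b (m + 1) k) :
    hasRamsey (a + b + 1) (m + 1) (k + 1) := by
  intro c hsym
  classical
  have hvN : a + b < a + b + 1 := by omega
  set v : Fin (a + b + 1) := ⟨a + b, hvN⟩ with hv
  set R : Finset (Fin (a + b + 1)) := univ.filter fun u => u ≠ v ∧ c v u = true with hRdef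
  set B : Finset (Fin (a + b + 1)) := univ.filter fun u => u ≠ v ∧ c v u = false with hBdef
  have hdisj : Disjoint R B := by
    rw [Finset.disjoint_left]
    intro u hu hu'
    rw [hRdef, Finset.mem_filter] at hu
    rw [hBdef, Finset.mem_filter] at hu'
    rw [hu.2.2] at hu'
    exact Bool.noConfusion hu'.2.2
  have hunion : R ∪ B = univ.erase v := by
    ext u
    rw [Finset.mem_union, hRdef, hBdef, Finset.mem_filter, Finset.mem_filter,
      Finset.mem_erase]
    constructor
    · rintro (⟨-, h1, -⟩ | ⟨-, h1, -⟩) <;> exact ⟨h1, Finset.mem_univ u⟩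
    · rintro ⟨h1, -⟩
      rcases Bool.eq_false_or_eq_true (c v u) with h2 | h2
      · exact Or.inl ⟨Finset.mem_univ u, h1, h2⟩
      · exact Or.inr ⟨Finset.mem_univ u, h1, h2⟩
  have hcards : R.card + B.card = a + b := by
    have := Finset.card_union_of_disjoint hdisj
    rw [hunion, Finset.card_erase_of_mem (Finset.mem_univ v), Finset.card_univ,
      Fintype.card_fin] at this
    omega
  rcases (show a ≤ R.card ∨ b ≤ B.card by omega) with hle | hle
  · obtain ⟨R', hR'R, hR'⟩ := Finset.exists_subset_card_eq hle
    set f : Fin a → Fin (a + b + 1) :=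
      fun i => (R'.orderIsoOfFin hR' i : Fin (a + b + 1)) with hf
    have hfinj : Function.Injective f := by
      intro i j hij
      simp only [hf] at hij
      exact (R'.orderIsoOfFin hR').injective (Subtype.coe_injective hij)
    have hfv : ∀ i, f i ≠ v ∧ c v (f i) = true := by
      intro i
      have h1 : f i ∈ R := by
        have := hR'R ((R'.orderIsoOfFin hR') i).2
        simpa [hf] using this
      rw [hRdef, Finset.mem_filter] at h1
      exact h1.2
    rcases ha (fun i j => c (f i) (f j)) (fun i j => hsym _ _) with
      ⟨s, hsc, hs⟩ | ⟨s, hsc, hs⟩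
    · obtain ⟨hcard, hcl⟩ := clique_image hfinj hs
      refine Or.inl ⟨insert v (s.image f), ?_, ?_⟩
      · rw [Finset.card_insert_of_notMem, hcard, hsc]
        intro hmem
        obtain ⟨x, -, hx⟩ := Finset.mem_image.mp hmem
        exact (hfv x).1 hx
      · intro i hi j hj hij
        rcases Finset.mem_insert.mp hi with rfl | hi'
        · rcases Finset.mem_insert.mp hj with rfl | hj'
          · exact absurd rfl hij
          · obtain ⟨x, -, rfl⟩ := Finset.mem_image.mp hj'
            exact (hfv x).2
        · rcases Finset.mem_insert.mp hj with rfl | hj'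
          · obtain ⟨x, -, rfl⟩ := Finset.mem_image.mp hi'
            rw [hsym]; exact (hfv x).2
          · exact hcl i hi' j hj' hij
    · obtain ⟨hcard, hcl⟩ := clique_image hfinj hs
      exact Or.inr ⟨s.image f, by rw [hcard, hsc], hcl⟩
  · obtain ⟨B', hB'B, hB'⟩ := Finset.exists_subset_card_eq hle
    set f : Fin b → Fin (a + b + 1) :=
      fun i => (B'.orderIsoOfFin hB' i : Fin (a + b + 1)) with hf
    have hfinj : Function.Injective f := by
      intro i j hij
      simp only [hf] at hij
      exact (B'.orderIsoOfFin hB').injective (Subtype.coe_injective hij)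
    have hfv : ∀ i, f i ≠ v ∧ c v (f i) = false := by
      intro i
      have h1 : f i ∈ B := by
        have := hB'B ((B'.orderIsoOfFin hB') i).2
        simpa [hf] using this
      rw [hBdef, Finset.mem_filter] at h1
      exact h1.2
    rcases hb (fun i j => c (f i) (f j)) (fun i j => hsym _ _) with
      ⟨s, hsc, hs⟩ | ⟨s, hsc, hs⟩
    · obtain ⟨hcard, hcl⟩ := clique_image hfinj hs
      exact Or.inl ⟨s.image f, by rw [hcard, hsc], hcl⟩
    · obtain ⟨hcard, hcl⟩ := clique_image hfinj hs
      refine Or.inr ⟨insert v (s.image f), ?_, ?_⟩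
      · rw [Finset.card_insert_of_notMem, hcard, hsc]
        intro hmem
        obtain ⟨x, -, hx⟩ := Finset.mem_image.mp hmem
        exact (hfv x).1 hx
      · intro i hi j hj hij
        rcases Finset.mem_insert.mp hi with rfl | hi'
        · rcases Finset.mem_insert.mp hj with rfl | hj'
          · exact absurd rfl hij
          · obtain ⟨x, -, rfl⟩ := Finset.mem_image.mp hj'
            exact (hfv x).2
        · rcases Finset.mem_insert.mp hj with rfl | hj'
          · obtain ⟨x, -, rfl⟩ := Finset.mem_image.mp hi'
            rw [hsym]; exact (hfv x).2
          · exact hcl i hi' j hj' hij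

lemma ramsey_exists (m k : ℕ) : ∃ N, hasRamsey N m k := by
  induction m generalizing k with
  | zero =>
    exact ⟨0, fun c hc => Or.inl ⟨∅, by simp, by simp⟩⟩
  | succ m ihm =>
    induction k with
    | zero => exact ⟨0, fun c hc => Or.inr ⟨∅, by simp, by simp⟩⟩
    | succ k ihk =>
      obtain ⟨a, ha⟩ := ihm (k + 1)
      obtain ⟨b, hb⟩ := ihk
      exact ⟨a + b + 1, hasRamsey_step ha hb⟩


/-- Erdős lower bound: for `k ≥ 3`, `R(k, k) > 2^{k/2}`, witnessed by a 2-coloring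
of the complete graph on `⌊2^{k/2}⌋ = Nat.sqrt (2^k)` vertices with no
monochromatic clique of size `k`. -/
theorem erdos_lower_bound (k : ℕ) (hk : 3 ≤ k) :
    Nat.sqrt (2 ^ k) < ramseyNumber k k ∧
    ∃ c : Fin (Nat.sqrt (2 ^ k)) → Fin (Nat.sqrt (2 ^ k)) → Bool,
      (∀ i j, c i j = c j i) ∧
      ¬ ∃ (b : Bool) (s : Finset (Fin (Nat.sqrt (2 ^ k)))),
          s.card = k ∧ ∀ i ∈ s, ∀ j ∈ s, i ≠ j → c i j = b := by
  have hnsq : Nat.sqrt (2 ^ k) * Nat.sqrt (2 ^ k) ≤ 2 ^ k := Nat.sqrt_le (2 ^ k)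
  obtain ⟨χ, hχ⟩ := good_coloring hk hnsq
  refine ⟨?_, ⟨fun i j => χ s(i, j), fun i j => by simp only; rw [Sym2.eq_swap], hχ⟩⟩
  by_contra h
  push_neg at h
  have hmem : ramseyNumber k k ∈ {N | hasRamsey N k k} :=
    Nat.sInf_mem (ramsey_exists k k)
  have hm : hasRamsey (ramseyNumber k k) k k := hmem
  have hle : ramseyNumber k k ≤ Nat.sqrt (2 ^ k) := h
  rcases hm (fun i j => χ s(Fin.castLE hle i, Fin.castLE hle j))
      (fun i j => by rw [Sym2.eq_swap]) with ⟨s, hsc, hs⟩ | ⟨s, hsc, hs⟩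
  · obtain ⟨hcard, hcl⟩ := clique_image (c := fun i j => χ s(i, j))
      (Fin.castLE_injective hle) hs
    exact hχ ⟨true, s.image (Fin.castLE hle), by rw [hcard, hsc], hcl⟩
  · obtain ⟨hcard, hcl⟩ := clique_image (c := fun i j => χ s(i, j))
      (Fin.castLE_injective hle) hs
    exact hχ ⟨false, s.image (Fin.castLE hle), by rw [hcard, hsc], hcl⟩
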